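/- Let K be a field, let L/K be a finite Galois extension with group G = Gal(L/K), and let p, q ∈ K[x] be monic polynomials of the same degree d that both split into d distinct roots in L. If the G-sets of roots of p in L and of roots of q in L are isomorphic as G-sets, then the K-algebras K[x]/(p) and K[x]/(q) are isomorphic. -/

import Mathlib

open Polynomial

section Stmt8Aux

variable {K L : Type*} [Field K] [Field L] [Algebra K L] [DecidableEq L]
    [FiniteDimensional K L] [IsGalois K L]

/-- The set of roots in `L` of a polynomial over `K` is stable under the Galois action. -/
theorem stmt8_root_mem (p : K[X]) (σ : L ≃ₐ[K] L) {x : L}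
    (hx : x ∈ (p.map (algebraMap K L)).roots.toFinset) :
    σ x ∈ (p.map (algebraMap K L)).roots.toFinset := by
  simp only [Multiset.mem_toFinset, mem_roots', IsRoot.def] at hx ⊢
  refine ⟨hx.1, ?_⟩
  have h1 : eval x (p.map (algebraMap K L)) = aeval x p := by rw [aeval_def, eval_map]
  have h2 : eval (σ x) (p.map (algebraMap K L)) = aeval (σ x) p := by rw [aeval_def, eval_map]
  have h3 : (aeval (σ x)) p = σ ((aeval x) p) := by
    simpa using aeval_algHom_apply (σ : L →ₐ[K] L) x p
  rw [h2, h3, ← h1, hx.2, map_zero]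

theorem stmt8_roots_nodup (p : K[X]) (hm : p.Monic)
    (hc : (p.map (algebraMap K L)).roots.toFinset.card = p.natDegree) :
    (p.map (algebraMap K L)).roots.Nodup := by
  rw [← Multiset.toFinset_card_eq_card_iff_nodup]
  have h1 : Multiset.card (p.map (algebraMap K L)).roots ≤ p.natDegree := by
    have h := Polynomial.card_roots' (p.map (algebraMap K L))
    rwa [hm.natDegree_map (algebraMap K L)] at h
  have h2 := Multiset.toFinset_card_le (p.map (algebraMap K L)).roots
  omega

theorem stmt8_map_eq_prod (p : K[X]) (hm : p.Monic) (hs : (p.map (algebraMap K L)).Splits)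
    (hc : (p.map (algebraMap K L)).roots.toFinset.card = p.natDegree) :
    p.map (algebraMap K L) =
      ∏ r ∈ (p.map (algebraMap K L)).roots.toFinset, (X - C r) := by
  have hnd := stmt8_roots_nodup p hm hc
  have hsp : (p.map (algebraMap K L)).Splits := hs
  have h := hsp.eq_prod_roots_of_monic (hm.map (algebraMap K L))
  rw [Finset.prod_eq_multiset_prod, Multiset.toFinset_val,
    Multiset.dedup_eq_self.mpr hnd]
  exact h

theorem stmt8_dvd_of_roots (p g : K[X]) (hm : p.Monic) (hs : (p.map (algebraMap K L)).Splits)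
    (hc : (p.map (algebraMap K L)).roots.toFinset.card = p.natDegree)
    (h0 : ∀ r ∈ (p.map (algebraMap K L)).roots.toFinset, aeval r g = 0) : p ∣ g := by
  rcases eq_or_ne g 0 with rfl | hg
  · exact dvd_zero p
  rw [← map_dvd_map (algebraMap K L) (algebraMap K L).injective hm]
  rw [stmt8_map_eq_prod p hm hs hc]
  have hgm : g.map (algebraMap K L) ≠ 0 := Polynomial.map_ne_zero hg
  have hsub : (p.map (algebraMap K L)).roots.toFinset.val ≤ (g.map (algebraMap K L)).roots := by
    rw [Multiset.le_iff_subset (p.map (algebraMap K L)).roots.toFinset.nodup]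
    intro r hr
    have hr' : r ∈ (p.map (algebraMap K L)).roots.toFinset := hr
    rw [mem_roots hgm]
    have h := h0 r hr'
    rwa [aeval_def, ← eval_map] at h
  calc ∏ r ∈ (p.map (algebraMap K L)).roots.toFinset, (X - C r)
      = ((p.map (algebraMap K L)).roots.toFinset.val.map fun r => X - C r).prod := by
        rw [Finset.prod_eq_multiset_prod]
    _ ∣ ((g.map (algebraMap K L)).roots.map fun r => X - C r).prod :=
        Multiset.prod_dvd_prod_of_le (Multiset.map_le_map hsub)
    _ ∣ g.map (algebraMap K L) := prod_multiset_X_sub_C_dvd _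

/-- Every Galois-equivariant function on a Galois-stable finite subset of `L` is given by
evaluation of a polynomial with coefficients in `K` (Lagrange interpolation + descent). -/
theorem stmt8_exists_poly (S : Finset L)
    (hstab : ∀ (σ : L ≃ₐ[K] L) (x : L), x ∈ S → σ x ∈ S)
    (a : {x // x ∈ S} → L)
    (ha : ∀ (σ : L ≃ₐ[K] L) (r : {x // x ∈ S}), a ⟨σ r, hstab σ r r.2⟩ = σ (a r)) :
    ∃ g : K[X], ∀ r : {x // x ∈ S}, aeval (r : L) g = a r := by
  classical
  let v : L → L := fun x => if h : x ∈ S then a ⟨x, h⟩ else 0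
  let F : L[X] := Lagrange.interpolate S id v
  have hinj : Set.InjOn id (S : Set L) := Function.injective_id.injOn
  have hFe : ∀ x (hx : x ∈ S), F.eval x = a ⟨x, hx⟩ := by
    intro x hx
    have h := Lagrange.eval_interpolate_at_node v hinj hx
    simpa [v, hx, -Lagrange.interpolate_apply] using h
  -- `F` is fixed by every element of the Galois group
  have hfix : ∀ σ : L ≃ₐ[K] L, F.map (σ : L →+* L) = F := by
    intro σ
    have hdeg : (F.map (σ : L →+* L)).degree < S.card := by
      rw [Polynomial.degree_map]
      exact Lagrange.degree_interpolate_lt v hinj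
    have heval : ∀ x ∈ S, (F.map (σ : L →+* L)).eval (id x) = v x := by
      intro x hx
      have hy : σ.symm x ∈ S := hstab σ.symm x hx
      have hxy : σ (σ.symm x) = x := σ.apply_symm_apply x
      have h1 : (F.map (σ : L →+* L)).eval (σ (σ.symm x)) = σ (F.eval (σ.symm x)) := by
        rw [eval_map]
        exact eval₂_at_apply (σ : L →+* L) (σ.symm x)
      have h2 : σ (a ⟨σ.symm x, hy⟩) = a ⟨x, hx⟩ := by
        rw [← ha σ ⟨σ.symm x, hy⟩]
        congr 1
        exact Subtype.ext hxy
      have h3 : v x = a ⟨x, hx⟩ := by simp [v, hx]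
      rw [id, ← hxy, h1, hFe _ hy, h2, hxy, h3]
    have h := Lagrange.eq_interpolate_of_eval_eq v hinj hdeg heval
    exact h
  -- hence its coefficients lie in `K`
  have hcoe : ∀ n, F.coeff n ∈ Set.range (algebraMap K L) := by
    intro n
    have hmem : F.coeff n ∈ IntermediateField.fixedField
        (IntermediateField.fixingSubgroup (⊥ : IntermediateField K L)) := by
      intro σ
      show (σ : L ≃ₐ[K] L) • F.coeff n = F.coeff n
      have h := congrArg (fun G => Polynomial.coeff G n) (hfix (σ : L ≃ₐ[K] L))
      simpa [Polynomial.coeff_map] using h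
    rw [IsGalois.fixedField_fixingSubgroup (⊥ : IntermediateField K L)] at hmem
    exact IntermediateField.mem_bot.mp hmem
  obtain ⟨g, hg⟩ : ∃ g : K[X], g.map (algebraMap K L) = F :=
    (Polynomial.mem_lifts F).mp ((Polynomial.lifts_iff_coeff_lifts F).mpr hcoe)
  refine ⟨g, fun r => ?_⟩
  rw [aeval_def, ← eval_map, hg, hFe _ r.2]

/-- Packaged: an injective evaluation map whose range is exactly the equivariant functions. -/
theorem stmt8_package (p : K[X]) (hm : p.Monic) (hs : (p.map (algebraMap K L)).Splits)
    (hc : (p.map (algebraMap K L)).roots.toFinset.card = p.natDegree) :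
    ∃ Φ : AdjoinRoot p →ₐ[K] ({x // x ∈ (p.map (algebraMap K L)).roots.toFinset} → L),
      Function.Injective Φ ∧
      ∀ f, f ∈ Φ.range ↔ ∀ (σ : L ≃ₐ[K] L)
        (r : {x // x ∈ (p.map (algebraMap K L)).roots.toFinset}),
        f ⟨σ r, stmt8_root_mem p σ r.2⟩ = σ (f r) := by
  have hp0 : ∀ r : {x // x ∈ (p.map (algebraMap K L)).roots.toFinset},
      aeval (r : L) p = 0 := by
    intro r
    have h := Multiset.mem_toFinset.mp r.2
    rw [mem_roots'] at h
    rw [aeval_def, ← eval_map]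
    exact h.2
  refine ⟨Pi.algHom _ _ fun r => AdjoinRoot.liftAlgHom p (Algebra.ofId K L) (r : L)
    (by have := hp0 r; rwa [aeval_def] at this), ?_, ?_⟩
  · rw [injective_iff_map_eq_zero]
    intro z hz
    obtain ⟨g, rfl⟩ := AdjoinRoot.mk_surjective z
    rw [AdjoinRoot.mk_eq_zero]
    refine stmt8_dvd_of_roots p g hm hs hc fun r hr => ?_
    have h := congrFun hz ⟨r, hr⟩
    exact h
  · intro f
    constructor
    · rintro ⟨z, rfl⟩
      obtain ⟨g, rfl⟩ := AdjoinRoot.mk_surjective z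
      intro σ r
      simp only [AlgHom.toRingHom_eq_coe, RingHom.coe_coe, Pi.algHom_apply, AdjoinRoot.liftAlgHom_mk]
      exact aeval_algHom_apply (σ : L →ₐ[K] L) (r : L) g
    · intro hf
      obtain ⟨g, hg⟩ := stmt8_exists_poly
        ((p.map (algebraMap K L)).roots.toFinset)
        (fun σ x hx => stmt8_root_mem p σ hx) f hf
      refine ⟨AdjoinRoot.mk p g, funext fun r => ?_⟩
      simp only [AlgHom.toRingHom_eq_coe, RingHom.coe_coe, Pi.algHom_apply, AdjoinRoot.liftAlgHom_mk]
      exact hg r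

end Stmt8Aux

/-- let `L/K` be finite Galois, and `p, q ∈ K[x]` monic of degree `d`, each
splitting into `d` distinct roots in `L`. If the sets of roots of `p` and of `q` in `L`
are isomorphic as `Gal(L/K)`-sets, then `K[x]/(p)` and `K[x]/(q)` are isomorphic as
`K`-algebras. -/
theorem stmt_8 (K L : Type*) [Field K] [Field L] [Algebra K L] [DecidableEq L]
    [FiniteDimensional K L] [IsGalois K L]
    (d : ℕ) (p q : K[X]) (hpm : p.Monic) (hqm : q.Monic)
    (hpd : p.natDegree = d) (hqd : q.natDegree = d)
    (hps : (p.map (algebraMap K L)).Splits) (hqs : (q.map (algebraMap K L)).Splits)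
    (hpc : (p.map (algebraMap K L)).roots.toFinset.card = d)
    (hqc : (q.map (algebraMap K L)).roots.toFinset.card = d)
    (e : L → L)
    (hbij : Set.BijOn e ((p.map (algebraMap K L)).roots.toFinset : Set L)
      ((q.map (algebraMap K L)).roots.toFinset : Set L))
    (hequiv : ∀ σ : L ≃ₐ[K] L, ∀ x ∈ ((p.map (algebraMap K L)).roots.toFinset : Set L),
      e (σ x) = σ (e x)) :
    Nonempty (AdjoinRoot p ≃ₐ[K] AdjoinRoot q) := by
  classical
  obtain ⟨Φp, hΦpi, hΦpr⟩ := stmt8_package (L := L) p hpm hps (by rw [hpc, hpd])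
  obtain ⟨Φq, hΦqi, hΦqr⟩ := stmt8_package (L := L) q hqm hqs (by rw [hqc, hqd])
  -- the bijection between the root sets, as an `Equiv` of subtypes
  let eFun : {x // x ∈ (p.map (algebraMap K L)).roots.toFinset} →
      {x // x ∈ (q.map (algebraMap K L)).roots.toFinset} :=
    fun r => ⟨e r, Finset.mem_coe.mp (hbij.mapsTo (Finset.mem_coe.mpr r.2))⟩
  have heBij : Function.Bijective eFun := by
    constructor
    · intro r s hrs
      exact Subtype.ext (hbij.injOn (Finset.mem_coe.mpr r.2) (Finset.mem_coe.mpr s.2)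
        (congrArg Subtype.val hrs))
    · intro s
      obtain ⟨x, hx, hex⟩ := hbij.surjOn (Finset.mem_coe.mpr s.2)
      exact ⟨⟨x, Finset.mem_coe.mp hx⟩, Subtype.ext hex⟩
  let eE := Equiv.ofBijective eFun heBij
  have heEcoe : ∀ r : {x // x ∈ (p.map (algebraMap K L)).roots.toFinset},
      (eE r : L) = e (r : L) := fun r => rfl
  -- equivariance of `eE` and `eE.symm`
  have heEeq : ∀ (σ : L ≃ₐ[K] L) (r : {x // x ∈ (p.map (algebraMap K L)).roots.toFinset}),
      eE ⟨σ r, stmt8_root_mem p σ r.2⟩ =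
        ⟨σ (eE r : L), stmt8_root_mem q σ (eE r).2⟩ := by
    intro σ r
    apply Subtype.ext
    show e (σ (r : L)) = σ (eE r : L)
    rw [heEcoe r]
    exact hequiv σ (r : L) (Finset.mem_coe.mpr r.2)
  have heEsymm : ∀ (σ : L ≃ₐ[K] L) (s : {x // x ∈ (q.map (algebraMap K L)).roots.toFinset}),
      eE.symm ⟨σ s, stmt8_root_mem q σ s.2⟩ =
        ⟨σ (eE.symm s : L), stmt8_root_mem p σ (eE.symm s).2⟩ := by
    intro σ s
    apply eE.injective
    rw [Equiv.apply_symm_apply, heEeq σ (eE.symm s)]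
    apply Subtype.ext
    show σ (s : L) = σ (eE (eE.symm s) : L)
    rw [Equiv.apply_symm_apply]
  -- the induced algebra isomorphism of the function algebras
  let Ψ : ({x // x ∈ (p.map (algebraMap K L)).roots.toFinset} → L) ≃ₐ[K]
      ({x // x ∈ (q.map (algebraMap K L)).roots.toFinset} → L) :=
    { toFun := fun f s => f (eE.symm s)
      invFun := fun f r => f (eE r)
      left_inv := fun f => funext fun r => congrArg f (Equiv.symm_apply_apply eE r)
      right_inv := fun f => funext fun s => congrArg f (Equiv.apply_symm_apply eE s)
      map_mul' := fun f g => rfl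
      map_add' := fun f g => rfl
      commutes' := fun k => rfl }
  have hmap : Φp.range.map (Ψ : _ →ₐ[K] _) = Φq.range := by
    ext f
    rw [Subalgebra.mem_map]
    constructor
    · rintro ⟨g, hg, rfl⟩
      rw [hΦqr]
      intro σ s
      show g (eE.symm ⟨σ s, stmt8_root_mem q σ s.2⟩) = σ (g (eE.symm s))
      rw [heEsymm σ s]
      exact (hΦpr g).mp hg σ (eE.symm s)
    · intro hf
      have hmem : (fun r => f (eE r)) ∈ Φp.range := by
        rw [hΦpr]
        intro σ r
        show f (eE ⟨σ r, stmt8_root_mem p σ r.2⟩) = σ (f (eE r))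
        rw [heEeq σ r]
        exact (hΦqr f).mp hf σ (eE r)
      refine ⟨fun r => f (eE r), hmem, funext fun s => ?_⟩
      show f (eE (eE.symm s)) = f s
      rw [Equiv.apply_symm_apply]
  exact ⟨((AlgEquiv.ofInjective Φp hΦpi).trans
    ((Ψ.subalgebraMap Φp.range).trans (Subalgebra.equivOfEq _ _ hmap))).trans
    (AlgEquiv.ofInjective Φq hΦqi).symm⟩
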